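/- Let ρ and σ be positive definite d×d density matrices. Then the Umegaki relative entropy has the integral representation S(ρ‖σ) = ∫₀^∞ Tr[ ( (tI+σ)^{−1} − (tI+ρ)^{−1} ) ρ ] dt, where I is the d×d identity matrix and the inverses are matrix inverses. -/

import Mathlib

open Matrix ComplexOrder

/-- The trace norm of a complex matrix: the sum of its singular values,
realized as `Tr √(Aᴴ A)`. -/
noncomputable def traceNorm {d : ℕ} (A : Matrix (Fin d) (Fin d) ℂ) : ℝ :=
  (((Matrix.posSemidef_conjTranspose_mul_self A).1.eigenvectorUnitary.1 *
      diagonal (fun i => ((√((Matrix.posSemidef_conjTranspose_mul_self A).1.eigenvalues i) : ℝ) : ℂ)) *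
      (star (Matrix.posSemidef_conjTranspose_mul_self A).1.eigenvectorUnitary :
        Matrix (Fin d) (Fin d) ℂ)).trace).re

/-- Functional calculus for a Hermitian matrix: apply `f` to the eigenvalues in an
orthonormal eigenbasis. -/
noncomputable def matFun {d : ℕ} {A : Matrix (Fin d) (Fin d) ℂ} (hA : A.IsHermitian)
    (f : ℝ → ℝ) : Matrix (Fin d) (Fin d) ℂ :=
  (hA.eigenvectorUnitary : Matrix (Fin d) (Fin d) ℂ) *
    Matrix.diagonal (fun i => (f (hA.eigenvalues i) : ℂ)) *
    (star hA.eigenvectorUnitary : Matrix (Fin d) (Fin d) ℂ)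

/-- `f : (0,∞) → ℝ` is operator monotone decreasing: for all positive definite matrices
`A ≤ B` (Loewner order) of any size, `f(B) ≤ f(A)`. -/
def OpMonoDecrOn (f : ℝ → ℝ) : Prop :=
  ∀ (n : ℕ) (A B : Matrix (Fin n) (Fin n) ℂ) (hA : A.PosDef) (hB : B.PosDef),
    (B - A).PosSemidef → (matFun hA.1 f - matFun hB.1 f).PosSemidef

/-- The quasi-relative entropy `S_f(ρ‖σ) = Σ_{j,k} λ_j f(μ_k/λ_j) |⟨φ_k|ψ_j⟩|²` computed from
spectral decompositions `ρ = Σ_j λ_j |ψ_j⟩⟨ψ_j|`, `σ = Σ_k μ_k |φ_k⟩⟨φ_k|`. -/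
noncomputable def quasiRelEntropy {d : ℕ} (f : ℝ → ℝ) {ρ σ : Matrix (Fin d) (Fin d) ℂ}
    (hρ : ρ.IsHermitian) (hσ : σ.IsHermitian) : ℝ :=
  ∑ j, ∑ k, hρ.eigenvalues j * f (hσ.eigenvalues k / hρ.eigenvalues j) *
    ‖(inner ℂ (hσ.eigenvectorBasis k) (hρ.eigenvectorBasis j) : ℂ)‖ ^ 2

/-- The Umegaki relative entropy `S(ρ‖σ) = Tr(ρ (log ρ − log σ))`. -/
noncomputable def relEntropy {d : ℕ} {ρ σ : Matrix (Fin d) (Fin d) ℂ}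
    (hρ : ρ.IsHermitian) (hσ : σ.IsHermitian) : ℝ :=
  ((ρ * (matFun hρ Real.log - matFun hσ Real.log)).trace).re

/-- The Tsallis relative q-entropy `S_q(ρ‖σ) = (1/(1−q))(1 − Tr(ρ^q σ^{1−q}))`. -/
noncomputable def tsallisEntropy {d : ℕ} (q : ℝ) {ρ σ : Matrix (Fin d) (Fin d) ℂ}
    (hρ : ρ.IsHermitian) (hσ : σ.IsHermitian) : ℝ :=
  (1 / (1 - q)) *
    (1 - ((matFun hρ (fun x => x ^ q) * matFun hσ (fun x => x ^ (1 - q))).trace).re)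

section Aux

open MeasureTheory Real Filter Set


lemma tend_aux (a b : ℝ) :
    Tendsto (fun t : ℝ => Real.log (t + a) - Real.log (t + b)) atTop (nhds 0) := by
  have h1 : Tendsto (fun t : ℝ => (t + a) / (t + b)) atTop (nhds 1) := by
    have : Tendsto (fun t : ℝ => 1 + (a - b) / (t + b)) atTop (nhds (1 + 0)) := by
      exact tendsto_const_nhds.add (Tendsto.div_atTop tendsto_const_nhds
        (tendsto_atTop_add_const_right _ b tendsto_id))
    rw [add_zero] at this
    refine this.congr' ?_
    filter_upwards [eventually_gt_atTop (max 0 (-b))] with t ht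
    have hb : t + b ≠ 0 := by
      have := lt_of_le_of_lt (le_max_right 0 (-b)) ht; linarith
    field_simp
    ring
  have h2 := ((Real.continuousAt_log one_ne_zero).tendsto).comp h1
  rw [Real.log_one] at h2
  refine h2.congr' ?_
  filter_upwards [eventually_gt_atTop (max (-a) (-b))] with t ht
  have ha : 0 < t + a := by have := lt_of_le_of_lt (le_max_left (-a) (-b)) ht; linarith
  have hb : 0 < t + b := by have := lt_of_le_of_lt (le_max_right (-a) (-b)) ht; linarith
  simp [Function.comp, Real.log_div ha.ne' hb.ne']

lemma deriv_aux (a b : ℝ) (ha : 0 < a) (hb : 0 < b) (x : ℝ) (hx : x ∈ Ici (0:ℝ)) :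
    HasDerivAt (fun t : ℝ => Real.log (t + a) - Real.log (t + b))
      ((x + a)⁻¹ - (x + b)⁻¹) x := by
  have hxa : x + a ≠ 0 := by have := hx.out; positivity
  have hxb : x + b ≠ 0 := by have := hx.out; positivity
  have h1 : HasDerivAt (fun t : ℝ => Real.log (t + a)) (1 / (x + a)) x :=
    HasDerivAt.log ((hasDerivAt_id x).add_const a) hxa
  have h2 : HasDerivAt (fun t : ℝ => Real.log (t + b)) (1 / (x + b)) x :=
    HasDerivAt.log ((hasDerivAt_id x).add_const b) hxb
  exact (h1.sub h2).congr_deriv (by rw [one_div, one_div])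

lemma scalar_le (a b : ℝ) (ha : 0 < a) (hb : 0 < b) (hab : a ≤ b) :
    IntegrableOn (fun t : ℝ => (t + a)⁻¹ - (t + b)⁻¹) (Ioi 0) volume ∧
    ∫ t in Ioi (0:ℝ), ((t + a)⁻¹ - (t + b)⁻¹) = Real.log b - Real.log a := by
  have g'pos : ∀ x ∈ Ioi (0:ℝ), 0 ≤ (x + a)⁻¹ - (x + b)⁻¹ := by
    intro x hx
    have hx0 := hx.out
    have : (x + b)⁻¹ ≤ (x + a)⁻¹ := by
      apply inv_anti₀ (by linarith) (by linarith)
    linarith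
  constructor
  · exact integrableOn_Ioi_deriv_of_nonneg' (deriv_aux a b ha hb) g'pos (tend_aux a b)
  · have := integral_Ioi_of_hasDerivAt_of_nonneg' (deriv_aux a b ha hb) g'pos (tend_aux a b)
    rw [this]; simp

lemma scalar_int (a b : ℝ) (ha : 0 < a) (hb : 0 < b) :
    IntegrableOn (fun t : ℝ => (t + a)⁻¹ - (t + b)⁻¹) (Ioi 0) volume ∧
    ∫ t in Ioi (0:ℝ), ((t + a)⁻¹ - (t + b)⁻¹) = Real.log b - Real.log a := by
  rcases le_total a b with h | h
  · exact scalar_le a b ha hb h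
  · obtain ⟨hi, he⟩ := scalar_le b a hb ha h
    have hneg : (fun t : ℝ => (t + a)⁻¹ - (t + b)⁻¹) =
        fun t : ℝ => -((t + b)⁻¹ - (t + a)⁻¹) := by funext t; ring
    constructor
    · rw [hneg]; exact hi.neg
    · rw [hneg, integral_neg, he]; ring

lemma trace_lemma {d : ℕ} (U V : Matrix (Fin d) (Fin d) ℂ) (a c : Fin d → ℂ) :
    ((U * Matrix.diagonal a * star U) * (V * Matrix.diagonal c * star V)).trace
      = ∑ j, ∑ k, a j * c k *
        ((starRingEnd ℂ) ((star V * U) k j) * ((star V * U) k j)) := by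
  have h1 : (U * Matrix.diagonal a * star U) * (V * Matrix.diagonal c * star V)
      = U * (Matrix.diagonal a * (star U * V * Matrix.diagonal c * star V)) := by
    simp only [Matrix.mul_assoc]
  rw [h1, Matrix.trace_mul_comm]
  have h2 : Matrix.diagonal a * (star U * V * Matrix.diagonal c * star V) * U
      = Matrix.diagonal a * ((star U * V) * Matrix.diagonal c * (star V * U)) := by
    simp only [Matrix.mul_assoc]
  rw [h2]
  have key : ∀ j k, (star U * V) j k = (starRingEnd ℂ) ((star V * U) k j) := by
    intro j k
    have h : star U * V = (star V * U)ᴴ := by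
      rw [Matrix.conjTranspose_mul]; simp [Matrix.star_eq_conjTranspose]
    rw [h, Matrix.conjTranspose_apply]; rfl
  rw [Matrix.trace]
  refine Finset.sum_congr rfl fun j _ => ?_
  rw [Matrix.diag_apply, Matrix.diagonal_mul, Matrix.mul_apply, Finset.mul_sum]
  refine Finset.sum_congr rfl fun k _ => ?_
  rw [Matrix.mul_diagonal, key j k]
  ring

lemma inv_lemma {d : ℕ} {σ : Matrix (Fin d) (Fin d) ℂ} (hσ : σ.PosDef) (t : ℝ) (ht : 0 < t) :
    ((t:ℂ) • (1 : Matrix (Fin d) (Fin d) ℂ) + σ)⁻¹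
      = (hσ.1.eigenvectorUnitary : Matrix (Fin d) (Fin d) ℂ) *
        Matrix.diagonal (fun k => (((t + hσ.1.eigenvalues k : ℝ) : ℂ))⁻¹) *
        (star hσ.1.eigenvectorUnitary : Matrix (Fin d) (Fin d) ℂ) := by
  set V := (hσ.1.eigenvectorUnitary : Matrix (Fin d) (Fin d) ℂ) with hVdef
  have hVV : V * star V = 1 := Matrix.mem_unitaryGroup_iff.mp hσ.1.eigenvectorUnitary.2
  have hVV' : star V * V = 1 := Matrix.mem_unitaryGroup_iff'.mp hσ.1.eigenvectorUnitary.2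
  have hne : ∀ k, ((t + hσ.1.eigenvalues k : ℝ) : ℂ) ≠ 0 := by
    intro k
    have := hσ.eigenvalues_pos k
    simp only [ne_eq, Complex.ofReal_eq_zero]
    linarith
  have hdiag : Matrix.diagonal (fun k => ((t + hσ.1.eigenvalues k : ℝ) : ℂ))
      = (t:ℂ) • (1 : Matrix (Fin d) (Fin d) ℂ)
        + Matrix.diagonal (RCLike.ofReal ∘ hσ.1.eigenvalues) := by
    ext i j
    by_cases h : i = j
    · subst h; simp [Matrix.diagonal_apply_eq, Matrix.one_apply]
    · simp [Matrix.diagonal_apply_ne _ h, Matrix.one_apply_ne h]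
  have hdecomp : (t:ℂ) • (1 : Matrix (Fin d) (Fin d) ℂ) + σ
      = V * Matrix.diagonal (fun k => ((t + hσ.1.eigenvalues k : ℝ) : ℂ)) * star V := by
    rw [hdiag, Matrix.mul_add, Matrix.add_mul]
    have hs := hσ.1.spectral_theorem
    rw [Unitary.conjStarAlgAut_apply] at hs
    rw [← hs]
    congr 1
    rw [Matrix.mul_smul, mul_one, Matrix.smul_mul, hVV]
  apply Matrix.inv_eq_right_inv
  rw [hdecomp]
  have : V * Matrix.diagonal (fun k => ((t + hσ.1.eigenvalues k : ℝ) : ℂ)) * star V *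
      (V * Matrix.diagonal (fun k => (((t + hσ.1.eigenvalues k : ℝ) : ℂ))⁻¹) * star V)
      = V * (Matrix.diagonal (fun k => ((t + hσ.1.eigenvalues k : ℝ) : ℂ)) * (star V * V) *
        Matrix.diagonal (fun k => (((t + hσ.1.eigenvalues k : ℝ) : ℂ))⁻¹)) * star V := by
    simp only [Matrix.mul_assoc]
  rw [this, hVV', mul_one, Matrix.diagonal_mul_diagonal]
  have : (fun k => ((t + hσ.1.eigenvalues k : ℝ) : ℂ) * (((t + hσ.1.eigenvalues k : ℝ) : ℂ))⁻¹)
      = fun _ => (1:ℂ) := by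
    funext k; exact mul_inv_cancel₀ (hne k)
  rw [this, Matrix.diagonal_one, mul_one, hVV]

lemma trace_fun' {d : ℕ} {ρ : Matrix (Fin d) (Fin d) ℂ} (hρ : ρ.IsHermitian)
    (V : Matrix (Fin d) (Fin d) ℂ) (c : Fin d → ℂ) :
    (ρ * (V * Matrix.diagonal c * star V)).trace
      = ∑ j, ∑ k, (hρ.eigenvalues j : ℂ) * c k *
        ((starRingEnd ℂ) ((star V * (hρ.eigenvectorUnitary : Matrix (Fin d) (Fin d) ℂ)) k j) *
          ((star V * (hρ.eigenvectorUnitary : Matrix (Fin d) (Fin d) ℂ)) k j)) := by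
  conv_lhs => rw [hρ.spectral_theorem]
  exact trace_lemma (hρ.eigenvectorUnitary : Matrix (Fin d) (Fin d) ℂ) V
    (RCLike.ofReal ∘ hρ.eigenvalues) c

lemma re_helper (x y : ℝ) (z : ℂ) :
    ((x : ℂ) * (y : ℂ) * ((starRingEnd ℂ) z * z)).re = x * y * Complex.normSq z := by
  rw [← Complex.normSq_eq_conj_mul_self, ← Complex.ofReal_mul, ← Complex.ofReal_mul,
    Complex.ofReal_re]

lemma sumw {d : ℕ} {ρ σ : Matrix (Fin d) (Fin d) ℂ} (hρ : ρ.IsHermitian) (hσ : σ.IsHermitian)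
    (j : Fin d) :
    ∑ k, Complex.normSq ((star (hσ.eigenvectorUnitary : Matrix (Fin d) (Fin d) ℂ) *
      (hρ.eigenvectorUnitary : Matrix (Fin d) (Fin d) ℂ)) k j) = 1 := by
  set U : Matrix (Fin d) (Fin d) ℂ := (hρ.eigenvectorUnitary : Matrix (Fin d) (Fin d) ℂ) with hUdef
  set V : Matrix (Fin d) (Fin d) ℂ := (hσ.eigenvectorUnitary : Matrix (Fin d) (Fin d) ℂ) with hVdef
  set W : Matrix (Fin d) (Fin d) ℂ := star V * U with hWdef
  have hUU : star U * U = 1 := Matrix.mem_unitaryGroup_iff'.mp hρ.eigenvectorUnitary.2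
  have hVV : V * star V = 1 := Matrix.mem_unitaryGroup_iff.mp hσ.eigenvectorUnitary.2
  have hWW : star W * W = 1 := by
    rw [hWdef, Matrix.star_mul, star_star]
    calc star U * V * (star V * U) = star U * (V * star V) * U := by
          simp only [Matrix.mul_assoc]
      _ = 1 := by rw [hVV, mul_one, hUU]
  have h1 : (star W * W) j j = (1 : Matrix (Fin d) (Fin d) ℂ) j j := by rw [hWW]
  rw [Matrix.mul_apply, Matrix.one_apply_eq] at h1
  have h2 : ∀ k, (star W) j k * W k j = ((Complex.normSq (W k j) : ℝ) : ℂ) := by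
    intro k
    rw [Matrix.star_apply, Complex.normSq_eq_conj_mul_self]
    rfl
  rw [Fintype.sum_congr _ _ h2] at h1
  exact_mod_cast h1

lemma relEntropy_eq_sum {d : ℕ} {ρ σ : Matrix (Fin d) (Fin d) ℂ}
    (hρ : ρ.PosDef) (hσ : σ.PosDef) :
    relEntropy hρ.1 hσ.1 = (∑ j, hρ.1.eigenvalues j * Real.log (hρ.1.eigenvalues j))
      - ∑ j, ∑ k, hρ.1.eigenvalues j * Real.log (hσ.1.eigenvalues k) *
          Complex.normSq ((star (hσ.1.eigenvectorUnitary : Matrix (Fin d) (Fin d) ℂ) *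
            (hρ.1.eigenvectorUnitary : Matrix (Fin d) (Fin d) ℂ)) k j) := by
  rw [relEntropy, mul_sub, Matrix.trace_sub, Complex.sub_re]
  congr 1
  · rw [matFun, trace_fun' hρ.1, Matrix.mem_unitaryGroup_iff'.mp hρ.1.eigenvectorUnitary.2,
      Complex.re_sum]
    refine Finset.sum_congr rfl fun j _ => ?_
    rw [Complex.re_sum, Finset.sum_eq_single j]
    · rw [re_helper]
      simp [Matrix.one_apply]
    · intro k _ hk
      simp [Matrix.one_apply, hk]
    · simp
  · rw [matFun, trace_fun' hρ.1, Complex.re_sum]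
    refine Finset.sum_congr rfl fun j _ => ?_
    rw [Complex.re_sum]
    refine Finset.sum_congr rfl fun k _ => ?_
    rw [re_helper]

lemma integrand_eq {d : ℕ} {ρ σ : Matrix (Fin d) (Fin d) ℂ} (hρ : ρ.PosDef) (hσ : σ.PosDef)
    (t : ℝ) (ht : 0 < t) :
    (((((t : ℂ) • (1 : Matrix (Fin d) (Fin d) ℂ) + σ)⁻¹ -
        ((t : ℂ) • (1 : Matrix (Fin d) (Fin d) ℂ) + ρ)⁻¹) * ρ).trace).re
      = ∑ j, ∑ k, Complex.normSq ((star (hσ.1.eigenvectorUnitary : Matrix (Fin d) (Fin d) ℂ) *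
            (hρ.1.eigenvectorUnitary : Matrix (Fin d) (Fin d) ℂ)) k j) *
          (hρ.1.eigenvalues j *
            ((t + hσ.1.eigenvalues k)⁻¹ - (t + hρ.1.eigenvalues j)⁻¹)) := by
  rw [inv_lemma hσ t ht, inv_lemma hρ t ht, Matrix.sub_mul, Matrix.trace_sub, Complex.sub_re,
    Matrix.trace_mul_comm, Matrix.trace_mul_comm _ ρ]
  rw [trace_fun' hρ.1, trace_fun' hρ.1, Matrix.mem_unitaryGroup_iff'.mp hρ.1.eigenvectorUnitary.2]
  have hterm2 : (∑ j, ∑ k, (hρ.1.eigenvalues j : ℂ) * (((t + hρ.1.eigenvalues k : ℝ) : ℂ))⁻¹ *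
      ((starRingEnd ℂ) ((1 : Matrix (Fin d) (Fin d) ℂ) k j) *
        ((1 : Matrix (Fin d) (Fin d) ℂ) k j))).re
      = ∑ j, hρ.1.eigenvalues j * (t + hρ.1.eigenvalues j)⁻¹ := by
    rw [Complex.re_sum]
    refine Finset.sum_congr rfl fun j _ => ?_
    rw [Complex.re_sum, Finset.sum_eq_single j]
    · rw [← Complex.ofReal_inv, re_helper]
      simp [Matrix.one_apply]
    · intro k _ hk
      simp [Matrix.one_apply, hk]
    · simp
  rw [hterm2]
  have hterm1 : (∑ j, ∑ k, (hρ.1.eigenvalues j : ℂ) * (((t + hσ.1.eigenvalues k : ℝ) : ℂ))⁻¹ *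
      ((starRingEnd ℂ) ((star (hσ.1.eigenvectorUnitary : Matrix (Fin d) (Fin d) ℂ) *
          (hρ.1.eigenvectorUnitary : Matrix (Fin d) (Fin d) ℂ)) k j) *
        ((star (hσ.1.eigenvectorUnitary : Matrix (Fin d) (Fin d) ℂ) *
          (hρ.1.eigenvectorUnitary : Matrix (Fin d) (Fin d) ℂ)) k j))).re
      = ∑ j, ∑ k, hρ.1.eigenvalues j * (t + hσ.1.eigenvalues k)⁻¹ *
          Complex.normSq ((star (hσ.1.eigenvectorUnitary : Matrix (Fin d) (Fin d) ℂ) *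
            (hρ.1.eigenvectorUnitary : Matrix (Fin d) (Fin d) ℂ)) k j) := by
    rw [Complex.re_sum]
    refine Finset.sum_congr rfl fun j _ => ?_
    rw [Complex.re_sum]
    refine Finset.sum_congr rfl fun k _ => ?_
    rw [← Complex.ofReal_inv, re_helper]
  rw [hterm1]
  rw [show (∑ j, ∑ k, Complex.normSq ((star (hσ.1.eigenvectorUnitary : Matrix (Fin d) (Fin d) ℂ) *
        (hρ.1.eigenvectorUnitary : Matrix (Fin d) (Fin d) ℂ)) k j) *
      (hρ.1.eigenvalues j * ((t + hσ.1.eigenvalues k)⁻¹ - (t + hρ.1.eigenvalues j)⁻¹)))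
    = (∑ j, ∑ k, hρ.1.eigenvalues j * (t + hσ.1.eigenvalues k)⁻¹ *
        Complex.normSq ((star (hσ.1.eigenvectorUnitary : Matrix (Fin d) (Fin d) ℂ) *
          (hρ.1.eigenvectorUnitary : Matrix (Fin d) (Fin d) ℂ)) k j))
      - ∑ j, ∑ k, hρ.1.eigenvalues j * (t + hρ.1.eigenvalues j)⁻¹ *
        Complex.normSq ((star (hσ.1.eigenvectorUnitary : Matrix (Fin d) (Fin d) ℂ) *
          (hρ.1.eigenvectorUnitary : Matrix (Fin d) (Fin d) ℂ)) k j) from by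
      rw [← Finset.sum_sub_distrib]
      refine Finset.sum_congr rfl fun j _ => ?_
      rw [← Finset.sum_sub_distrib]
      refine Finset.sum_congr rfl fun k _ => ?_
      ring]
  congr 1
  refine Finset.sum_congr rfl fun j _ => ?_
  rw [show (∑ k, hρ.1.eigenvalues j * (t + hρ.1.eigenvalues j)⁻¹ *
      Complex.normSq ((star (hσ.1.eigenvectorUnitary : Matrix (Fin d) (Fin d) ℂ) *
        (hρ.1.eigenvectorUnitary : Matrix (Fin d) (Fin d) ℂ)) k j))
    = hρ.1.eigenvalues j * (t + hρ.1.eigenvalues j)⁻¹ *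
      ∑ k, Complex.normSq ((star (hσ.1.eigenvectorUnitary : Matrix (Fin d) (Fin d) ℂ) *
        (hρ.1.eigenvectorUnitary : Matrix (Fin d) (Fin d) ℂ)) k j) from by
      rw [Finset.mul_sum]]
  rw [sumw hρ.1 hσ.1 j, mul_one]

end Aux

/-- integral representation of the Umegaki relative entropy:
`S(ρ‖σ) = ∫₀^∞ Tr[((tI+σ)⁻¹ − (tI+ρ)⁻¹) ρ] dt`. -/
theorem relEntropy_eq_integral (d : ℕ)
    (ρ σ : Matrix (Fin d) (Fin d) ℂ) (hρ : ρ.PosDef) (hσ : σ.PosDef)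
    (hρtr : ρ.trace = 1) (hσtr : σ.trace = 1) :
    relEntropy hρ.1 hσ.1 =
      ∫ t in Set.Ioi (0 : ℝ),
        (((((t : ℂ) • (1 : Matrix (Fin d) (Fin d) ℂ) + σ)⁻¹ -
            ((t : ℂ) • (1 : Matrix (Fin d) (Fin d) ℂ) + ρ)⁻¹) * ρ).trace).re := by
  set lam := hρ.1.eigenvalues with hlamdef
  set mu := hσ.1.eigenvalues with hmudef
  set w : Fin d → Fin d → ℝ := fun j k =>
    Complex.normSq ((star (hσ.1.eigenvectorUnitary : Matrix (Fin d) (Fin d) ℂ) *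
      (hρ.1.eigenvectorUnitary : Matrix (Fin d) (Fin d) ℂ)) k j) with hwdef
  have hlam : ∀ j, 0 < lam j := hρ.eigenvalues_pos
  have hmu : ∀ k, 0 < mu k := hσ.eigenvalues_pos
  have hwnn : ∀ j k, 0 ≤ w j k := fun j k => Complex.normSq_nonneg _
  have hsw : ∀ j, ∑ k, w j k = 1 := fun j => sumw hρ.1 hσ.1 j
  have hint : ∀ j k, MeasureTheory.Integrable
      (fun t : ℝ => w j k * (lam j * ((t + mu k)⁻¹ - (t + lam j)⁻¹)))
      (MeasureTheory.volume.restrict (Set.Ioi 0)) := by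
    intro j k
    exact (((scalar_int (mu k) (lam j) (hmu k) (hlam j)).1).const_mul (lam j)).const_mul (w j k)
  rw [MeasureTheory.setIntegral_congr_fun measurableSet_Ioi
    (fun t ht => integrand_eq hρ hσ t ht)]
  have hflat : (fun t : ℝ => ∑ j, ∑ k, w j k * (lam j * ((t + mu k)⁻¹ - (t + lam j)⁻¹)))
      = fun t : ℝ => ∑ p : Fin d × Fin d,
          w p.1 p.2 * (lam p.1 * ((t + mu p.2)⁻¹ - (t + lam p.1)⁻¹)) := by
    funext t
    rw [Fintype.sum_prod_type]
  rw [hflat]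
  rw [MeasureTheory.integral_finset_sum _ (fun p _ => hint p.1 p.2)]
  have hval : ∀ p : Fin d × Fin d,
      (∫ t in Set.Ioi (0:ℝ), w p.1 p.2 * (lam p.1 * ((t + mu p.2)⁻¹ - (t + lam p.1)⁻¹)))
        = w p.1 p.2 * (lam p.1 * (Real.log (lam p.1) - Real.log (mu p.2))) := by
    intro p
    rw [MeasureTheory.integral_const_mul, MeasureTheory.integral_const_mul,
      (scalar_int (mu p.2) (lam p.1) (hmu p.2) (hlam p.1)).2]
  rw [Finset.sum_congr rfl (fun p _ => hval p)]
  rw [relEntropy_eq_sum hρ hσ, Fintype.sum_prod_type]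
  rw [show (∑ j, ∑ k, w j k * (lam j * (Real.log (lam j) - Real.log (mu k))))
      = (∑ j, ∑ k, w j k * (lam j * Real.log (lam j)))
        - ∑ j, ∑ k, lam j * Real.log (mu k) * w j k from by
    rw [← Finset.sum_sub_distrib]
    refine Finset.sum_congr rfl fun j _ => ?_
    rw [← Finset.sum_sub_distrib]
    refine Finset.sum_congr rfl fun k _ => ?_
    ring]
  congr 1
  refine Finset.sum_congr rfl fun j _ => ?_
  rw [show (∑ k, w j k * (lam j * Real.log (lam j)))
      = (∑ k, w j k) * (lam j * Real.log (lam j)) from by rw [Finset.sum_mul]]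
  rw [hsw j, one_mul]
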